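/- Let f : W → Z be a continuous map of topological spaces, F a sheaf of abelian groups on W, and t ≥ 0 an integer such that the higher direct images R^i f_* F vanish for i = 1, …, t. Then for all i = 0, 1, …, t there are isomorphisms H^i(W, F) ≅ H^i(Z, f_* F). -/

import Mathlib

open CategoryTheory CategoryTheory.Limits Opposite TopologicalSpace

universe u

/-- The global sections functor on sheaves of abelian groups on a topological space. -/
noncomputable def globalSections (X : TopCat.{u}) :
    Sheaf (Opens.grothendieckTopology X) AddCommGrpCat.{u} ⥤ AddCommGrpCat.{u} :=
  (sheafToPresheaf _ _) ⋙ (evaluation _ _).obj (op ⊤)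

/-- The pushforward functor `f_*` on sheaves of abelian groups, along a continuous map
`f : W → Z`. -/
noncomputable def pushforwardSheaf {W Z : TopCat.{u}} (f : W ⟶ Z) :
    Sheaf (Opens.grothendieckTopology W) AddCommGrpCat.{u} ⥤
      Sheaf (Opens.grothendieckTopology Z) AddCommGrpCat.{u} :=
  (Opens.map f).sheafPushforwardContinuous AddCommGrpCat.{u}
    (Opens.grothendieckTopology Z) (Opens.grothendieckTopology W)

instance (X : TopCat.{u}) : (globalSections X).Additive := ⟨rfl⟩

instance {W Z : TopCat.{u}} (f : W ⟶ Z) : (pushforwardSheaf f).Additive := ⟨rfl⟩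

open CategoryTheory CategoryTheory.Limits HomologicalComplex

universe v₁ u₁ v₂ u₂
variable {B : Type u₁} [Category.{v₁} B] {C : Type u₂} [Category.{v₂} C]
  [Abelian B] [Abelian C]

namespace Stmt10Aux

/-- Build an injective resolution from a complex with suitable properties. -/
noncomputable def mkRes (M : CochainComplex B ℕ) (hinj : ∀ n, Injective (M.X n))
    {A : B} (ιA : A ⟶ M.X 0) (w : ιA ≫ M.d 0 1 = 0) (hmono : Mono ιA)
    (hex0 : (ShortComplex.mk ιA (M.d 0 1) w).Exact)
    (hexact : ∀ n : ℕ, M.ExactAt (n + 1)) : InjectiveResolution A where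
  cocomplex := M
  injective := hinj
  ι := (CochainComplex.fromSingle₀Equiv _ _).symm ⟨ιA, w⟩
  quasiIso := ⟨fun n => by
    cases n with
    | zero =>
      rw [CochainComplex.quasiIsoAt₀_iff, ShortComplex.quasiIso_iff_of_zeros]
      · refine (ShortComplex.exact_and_mono_f_iff_of_iso ?_).2 ⟨hex0, hmono⟩
        exact ShortComplex.isoMk (Iso.refl _) (Iso.refl _) (Iso.refl _)
          (by simp [CochainComplex.fromSingle₀Equiv_symm_apply_f_zero]; exact (Category.id_comp _).trans (Category.comp_id _).symm)
          (by simp; exact (Category.id_comp _).trans (Category.comp_id _).symm)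
      · rfl
      · rfl
      · exact M.shape 0 0 (by simp)
    | succ n =>
      rw [quasiIsoAt_iff_exactAt]
      · exact hexact n
      · apply CochainComplex.exactAt_succ_single_obj⟩

/-- If `S.f` factors as `q ≫ k` with `k` a kernel of `S.g`, the homology of `S` is
the cokernel of `q`. -/
noncomputable def homologyIsoCokernel (S : ShortComplex C) {E : C} (q : S.X₁ ⟶ E)
    (k : E ⟶ S.X₂) (wk : k ≫ S.g = 0) (hk : IsLimit (KernelFork.ofι k wk))
    (hf : S.f = q ≫ k) : S.homology ≅ cokernel q := by
  have hm : Mono k := mono_of_isLimit_fork hk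
  have hlift : hk.lift (KernelFork.ofι S.f S.zero) = q := by
    apply Fork.IsLimit.hom_ext hk
    rw [Fork.IsLimit.lift_ι]
    exact hf
  exact ShortComplex.LeftHomologyData.homologyIso
    { K := E
      H := cokernel q
      i := k
      π := cokernel.π q
      wi := wk
      hi := hk
      wπ := by rw [hlift]; exact cokernel.condition q
      hπ := CokernelCofork.IsColimit.ofπ _ _
        (fun g' eq' => cokernel.desc q g' (by rwa [hlift] at eq'))
        (fun g' eq' => cokernel.π_desc q g' _)
        (fun g' eq' m hm => by
          apply coequalizer.hom_ext
          simpa using hm) }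

section
variable (T : B ⥤ C) [T.Additive] [PreservesFiniteLimits T]

/-- degree 0 computation -/
noncomputable def derivedZeroIso [EnoughInjectives B] (J : CochainComplex B ℕ)
    {A : B} (ιA : A ⟶ J.X 0) (w : ιA ≫ J.d 0 1 = 0) (hmono : Mono ιA)
    (hex0 : (ShortComplex.mk ιA (J.d 0 1) w).Exact) :
    (T.rightDerived 0).obj A ≅
      ((T.mapHomologicalComplex (ComplexShape.up ℕ)).obj J).homology 0 := by
  have hker : IsLimit (KernelFork.ofι ιA w) := hex0.fIsKernel
  have hTker := KernelFork.mapIsLimit _ hker T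
  exact T.rightDerivedZeroIsoSelf.app A ≪≫
    IsLimit.conePointUniqueUpToIso hTker
      (((T.mapHomologicalComplex (ComplexShape.up ℕ)).obj J).cyclesIsKernel 0 1 (by simp)) ≪≫
    CochainComplex.isoHomologyπ₀ _

/-- homology of the `T`-image of a truncation -/
noncomputable def mapTruncateHomologyIso (J : CochainComplex B ℕ) (k : ℕ) :
    ((T.mapHomologicalComplex (ComplexShape.up ℕ)).obj (CochainComplex.truncate.obj J)).homology
      (k+1) ≅ ((T.mapHomologicalComplex (ComplexShape.up ℕ)).obj J).homology (k+2) :=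
  (((T.mapHomologicalComplex (ComplexShape.up ℕ)).obj
      (CochainComplex.truncate.obj J)).homologyIsoSc' k (k+1) (k+2) (by simp) (by simp)) ≪≫
    (((T.mapHomologicalComplex (ComplexShape.up ℕ)).obj J).homologyIsoSc'
      (k+1) (k+2) (k+3) (by simp) (by simp)).symm

/-- homology of the `T`-image of an augmentation -/
noncomputable def mapAugmentHomologyIso (N : CochainComplex B ℕ) {X : B} (f : X ⟶ N.X 0)
    (w : f ≫ N.d 0 1 = 0) (k : ℕ) :
    ((T.mapHomologicalComplex (ComplexShape.up ℕ)).obj (N.augment f w)).homology (k+2) ≅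
      ((T.mapHomologicalComplex (ComplexShape.up ℕ)).obj N).homology (k+1) :=
  (((T.mapHomologicalComplex (ComplexShape.up ℕ)).obj (N.augment f w)).homologyIsoSc'
      (k+1) (k+2) (k+3) (by simp) (by simp)) ≪≫
    (((T.mapHomologicalComplex (ComplexShape.up ℕ)).obj N).homologyIsoSc'
      k (k+1) (k+2) (by simp) (by simp)).symm

end

lemma augment_exactAt_iff (N : CochainComplex C ℕ) {X : C} (f : X ⟶ N.X 0)
    (w : f ≫ N.d 0 1 = 0) (k : ℕ) :
    (N.augment f w).ExactAt (k+2) ↔ N.ExactAt (k+1) := by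
  rw [(N.augment f w).exactAt_iff' (k+1) (k+2) (k+3) (by simp) (by simp),
    N.exactAt_iff' k (k+1) (k+2) (by simp) (by simp)]
  rfl

lemma truncate_exactAt_iff (K : CochainComplex C ℕ) (k : ℕ) :
    (CochainComplex.truncate.obj K).ExactAt (k+1) ↔ K.ExactAt (k+2) := by
  rw [(CochainComplex.truncate.obj K).exactAt_iff' k (k+1) (k+2) (by simp) (by simp),
    K.exactAt_iff' (k+1) (k+2) (k+3) (by simp) (by simp)]
  rfl

variable [EnoughInjectives B]

lemma core (T : B ⥤ C) [T.Additive] [PreservesFiniteLimits T] :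
    ∀ (t : ℕ) (J : CochainComplex B ℕ), (∀ n, Injective (J.X n)) → ∀ (A : B)
    (ιA : A ⟶ J.X 0) (w : ιA ≫ J.d 0 1 = 0), Mono ιA →
    (ShortComplex.mk ιA (J.d 0 1) w).Exact →
    (∀ k, 1 ≤ k → k ≤ t → J.ExactAt k) → ∀ n, n ≤ t →
    Nonempty ((T.rightDerived n).obj A ≅
      ((T.mapHomologicalComplex (ComplexShape.up ℕ)).obj J).homology n) := by
  intro t
  induction t with
  | zero =>
    intro J hinj A ιA w hmono hex0 _ n hn
    obtain rfl : n = 0 := Nat.le_zero.mp hn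
    exact ⟨derivedZeroIso T J ιA w hmono hex0⟩
  | succ t IH =>
    intro J hinj A ιA w hmono hex0 hex n hn
    cases n with
    | zero => exact ⟨derivedZeroIso T J ιA w hmono hex0⟩
    | succ m =>
      -- the syzygy object
      let A' : B := kernel (J.d 1 2)
      let kι : A' ⟶ J.X 1 := kernel.ι (J.d 1 2)
      let p : J.X 0 ⟶ A' := kernel.lift (J.d 1 2) (J.d 0 1) (J.d_comp_d 0 1 2)
      have hpι : p ≫ kι = J.d 0 1 := kernel.lift_ι _ _ _
      have hexJ1 : (J.sc' 0 1 2).Exact := by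
        rw [← J.exactAt_iff' 0 1 2 (by simp) (by simp)]
        exact hex 1 le_rfl (by omega)
      have hp : Epi p := (ShortComplex.exact_iff_epi_kernel_lift _).1 hexJ1
      -- an injective resolution of the syzygy
      let N : InjectiveResolution A' := InjectiveResolution.of A'
      let ν : A' ⟶ N.cocomplex.X 0 := N.ι.f 0
      have wf : (p ≫ ν) ≫ N.cocomplex.d 0 1 = 0 := by
        rw [Category.assoc, show ν ≫ N.cocomplex.d 0 1 = 0 from N.ι_f_zero_comp_complex_d, comp_zero]
      -- the augmented complex, an injective resolution of A
      let M : CochainComplex B ℕ := N.cocomplex.augment (p ≫ ν) wf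
      have hιp : ιA ≫ p = 0 := by
        rw [← cancel_mono kι, Category.assoc, hpι, w, zero_comp]
      have wM : ιA ≫ M.d 0 1 = 0 := by
        show ιA ≫ p ≫ ν = 0
        rw [← Category.assoc, hιp, zero_comp]
      have hkerd : IsLimit (KernelFork.ofι ιA w) := hex0.fIsKernel
      have hkerp : IsLimit (KernelFork.ofι ιA hιp) :=
        KernelFork.IsLimit.ofι _ _
          (fun g' hg' => (KernelFork.IsLimit.lift' hkerd g'
            (by rw [← hpι, ← Category.assoc, hg', zero_comp])).1)
          (fun g' hg' => (KernelFork.IsLimit.lift' hkerd g' _).2)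
          (fun g' hg' m hm => by
            apply Fork.IsLimit.hom_ext hkerd
            rw [(KernelFork.IsLimit.lift' hkerd g' _).2]
            exact hm)
      have hkerM : IsLimit (KernelFork.ofι ιA wM) :=
        by haveI : Mono ν := (inferInstance : Mono (N.ι.f 0)); exact isKernelCompMono hkerp ν rfl
      have hex0M : (ShortComplex.mk ιA (M.d 0 1) wM).Exact :=
        ShortComplex.exact_of_f_is_kernel _ hkerM
      have hexM : ∀ n : ℕ, M.ExactAt (n+1) := by
        intro n
        cases n with
        | zero =>
          rw [M.exactAt_iff' 0 1 2 (by simp) (by simp)]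
          have hN0 : (ShortComplex.mk ν (N.cocomplex.d 0 1)
              N.ι_f_zero_comp_complex_d).Exact :=
            ShortComplex.exact_of_f_is_kernel _ N.isLimitKernelFork
          let φ : (ShortComplex.mk (p ≫ ν) (N.cocomplex.d 0 1) wf) ⟶
              (ShortComplex.mk ν (N.cocomplex.d 0 1) N.ι_f_zero_comp_complex_d) :=
            { τ₁ := p, τ₂ := 𝟙 _, τ₃ := 𝟙 _ }
          haveI : Epi φ.τ₁ := hp
          haveI : IsIso φ.τ₂ := by dsimp; infer_instance
          haveI : Mono φ.τ₃ := by dsimp; infer_instance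
          exact (ShortComplex.exact_iff_of_epi_of_isIso_of_mono φ).2 hN0
        | succ n =>
          rw [augment_exactAt_iff]
          exact N.cocomplex_exactAt_succ n
      have hinjM : ∀ n : ℕ, Injective (M.X n) := by
        intro n
        cases n with
        | zero => exact hinj 0
        | succ n => exact N.injective n
      let MRes : InjectiveResolution A := mkRes M hinjM ιA wM hmono hex0M hexM
      have e1 : (T.rightDerived (m+1)).obj A ≅
          ((T.mapHomologicalComplex (ComplexShape.up ℕ)).obj M).homology (m+1) :=
        MRes.isoRightDerivedObj T (m+1)
      cases m with
      | zero =>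
        -- compare both H¹ with the cokernel of T.map p
        have wk1 : T.map ν ≫
            (((T.mapHomologicalComplex (ComplexShape.up ℕ)).obj M).sc' 0 1 2).g = 0 := by
          show T.map ν ≫ T.map (N.cocomplex.d 0 1) = 0
          rw [← T.map_comp, show ν ≫ N.cocomplex.d 0 1 = 0 from N.ι_f_zero_comp_complex_d, T.map_zero]
        have hk1 : IsLimit (KernelFork.ofι (T.map ν) wk1) :=
          KernelFork.mapIsLimit _ N.isLimitKernelFork T
        have c1 : ((T.mapHomologicalComplex (ComplexShape.up ℕ)).obj M).homology 1 ≅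
            cokernel (T.map p) :=
          (((T.mapHomologicalComplex (ComplexShape.up ℕ)).obj M).homologyIsoSc'
            0 1 2 (by simp) (by simp)) ≪≫
          homologyIsoCokernel (((T.mapHomologicalComplex (ComplexShape.up ℕ)).obj M).sc' 0 1 2) (T.map p) (T.map ν) wk1 hk1 (by show T.map (p ≫ ν) = _; rw [T.map_comp]; rfl)
        have wk2 : T.map kι ≫
            (((T.mapHomologicalComplex (ComplexShape.up ℕ)).obj J).sc' 0 1 2).g = 0 := by
          show T.map kι ≫ T.map (J.d 1 2) = 0
          rw [← T.map_comp, kernel.condition, T.map_zero]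
        have hk2 : IsLimit (KernelFork.ofι (T.map kι) wk2) :=
          KernelFork.mapIsLimit _ (kernelIsKernel (J.d 1 2)) T
        have c2 : ((T.mapHomologicalComplex (ComplexShape.up ℕ)).obj J).homology 1 ≅
            cokernel (T.map p) :=
          (((T.mapHomologicalComplex (ComplexShape.up ℕ)).obj J).homologyIsoSc'
            0 1 2 (by simp) (by simp)) ≪≫
          homologyIsoCokernel (((T.mapHomologicalComplex (ComplexShape.up ℕ)).obj J).sc' 0 1 2) (T.map p) (T.map kι) wk2 hk2
            (by show T.map (J.d 0 1) = _; exact (congrArg T.map hpι.symm).trans (T.map_comp _ _))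
        exact ⟨e1 ≪≫ c1 ≪≫ c2.symm⟩
      | succ k =>
        -- dimension shifting
        have e2 := mapAugmentHomologyIso T N.cocomplex (p ≫ ν) wf k
        have e3 : (T.rightDerived (k+1)).obj A' ≅
            ((T.mapHomologicalComplex (ComplexShape.up ℕ)).obj N.cocomplex).homology (k+1) :=
          N.isoRightDerivedObj T (k+1)
        have wk' : kι ≫ (CochainComplex.truncate.obj J).d 0 1 = 0 := kernel.condition _
        have hexkι : (ShortComplex.mk kι ((CochainComplex.truncate.obj J).d 0 1) wk').Exact :=
          ShortComplex.exact_of_f_is_kernel _ (kernelIsKernel (J.d 1 2))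
        have hex' : ∀ k', 1 ≤ k' → k' ≤ t → (CochainComplex.truncate.obj J).ExactAt k' := by
          intro k' h1 h2
          obtain ⟨k'', rfl⟩ : ∃ k'', k' = k'' + 1 := ⟨k' - 1, by omega⟩
          rw [truncate_exactAt_iff]
          exact hex _ (by omega) (by omega)
        obtain ⟨e4⟩ := IH (CochainComplex.truncate.obj J) (fun n => hinj (n+1)) A' kι wk'
          (inferInstance : Mono (kernel.ι (J.d 1 2))) hexkι hex' (k+1) (by omega)
        have e5 := mapTruncateHomologyIso T J k
        exact ⟨e1 ≪≫ e2 ≪≫ e3.symm ≪≫ e4 ≪≫ e5⟩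

end Stmt10Aux


/-- if `f : W → Z` is continuous, `F` a sheaf of abelian groups on `W`, and
the higher direct images `R^i f_* F` vanish for `i = 1, …, t`, then
`H^i(W, F) ≅ H^i(Z, f_* F)` for `i = 0, 1, …, t`.  Here sheaf cohomology `H^i` is the
`i`-th right derived functor of the global sections functor, and `R^i f_*` is the `i`-th
right derived functor of the pushforward functor. -/
theorem stmt_10 (W Z : TopCat.{u}) (f : W ⟶ Z)
    (F : Sheaf (Opens.grothendieckTopology W) AddCommGrpCat.{u})
    [EnoughInjectives (Sheaf (Opens.grothendieckTopology W) AddCommGrpCat.{u})]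
    [EnoughInjectives (Sheaf (Opens.grothendieckTopology Z) AddCommGrpCat.{u})]
    (t : ℕ)
    (hvanish : ∀ i : ℕ, 1 ≤ i → i ≤ t →
      IsZero (((pushforwardSheaf f).rightDerived i).obj F)) :
    ∀ i : ℕ, i ≤ t →
      Nonempty ((((globalSections W).rightDerived i).obj F) ≅
        (((globalSections Z).rightDerived i).obj ((pushforwardSheaf f).obj F))) := by
  intro i hi
  haveI : PreservesLimitsOfSize.{u,u} (pushforwardSheaf f) :=
    ((Opens.map f).sheafAdjunctionContinuous AddCommGrpCat.{u} (Opens.grothendieckTopology Z)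
      (Opens.grothendieckTopology W)).rightAdjoint_preservesLimits
  haveI : PreservesFiniteLimits (pushforwardSheaf f) := inferInstance
  haveI : PreservesFiniteLimits (globalSections Z) := by
    unfold globalSections; infer_instance
  let G := pushforwardSheaf f
  let I : InjectiveResolution F := InjectiveResolution.of F
  let J := (G.mapHomologicalComplex (ComplexShape.up ℕ)).obj I.cocomplex
  haveI : PreservesFiniteLimits ((Opens.map f).op.lan : (_ ⥤ _ ⥤ AddCommGrpCat.{u})) :=
    lan_preservesFiniteLimits_of_flat _ _
  haveI : PreservesFiniteLimits ((Opens.map f).sheafPullback AddCommGrpCat.{u}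
      (Opens.grothendieckTopology Z) (Opens.grothendieckTopology W)) :=
    Functor.sheafPullbackConstruction.preservesFiniteLimits _ _ _ _
  haveI : ((Opens.map f).sheafPullback AddCommGrpCat.{u}
      (Opens.grothendieckTopology Z) (Opens.grothendieckTopology W)).PreservesMonomorphisms :=
    inferInstance
  have hinj : ∀ n, Injective (J.X n) := fun n =>
    Injective.injective_of_adjoint ((Opens.map f).sheafAdjunctionContinuous _ _ _) _
  let ιA : G.obj F ⟶ J.X 0 := G.map (I.ι.f 0)
  have wA : ιA ≫ J.d 0 1 = 0 := by
    exact (G.map_comp _ _).symm.trans ((congrArg G.map I.ι_f_zero_comp_complex_d).trans (G.map_zero _ _))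
  have hker : IsLimit (KernelFork.ofι ιA wA) :=
    KernelFork.mapIsLimit _ I.isLimitKernelFork G
  have hmono : Mono ιA := mono_of_isLimit_fork hker
  have hex0 : (ShortComplex.mk ιA (J.d 0 1) wA).Exact :=
    ShortComplex.exact_of_f_is_kernel _ hker
  have hex : ∀ k, 1 ≤ k → k ≤ t → J.ExactAt k := by
    intro k h1 h2
    rw [HomologicalComplex.exactAt_iff_isZero_homology]
    exact IsZero.of_iso (hvanish k h1 h2) (I.isoRightDerivedObj G k).symm
  obtain ⟨e⟩ := Stmt10Aux.core (globalSections Z) t J hinj (G.obj F) ιA wA hmono hex0 hex i hi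
  have eW : ((globalSections W).rightDerived i).obj F ≅
      (((globalSections Z).mapHomologicalComplex (ComplexShape.up ℕ)).obj J).homology i :=
    I.isoRightDerivedObj (globalSections W) i
  exact ⟨eW ≪≫ e.symm⟩
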